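/- In the Eisenberg–Noe setting (α_x = α_L = 1), each component of the greatest clearing payment map x ↦ p_i(x) is a concave function on ℝⁿ₊, and consequently each component of the greatest clearing wealth map x ↦ V_i(x) = x_i + (Πᵀ p(x))_i − p̄_i is concave on ℝⁿ₊. -/

import Mathlib

open Matrix BigOperators

noncomputable section

/-- Total liabilities `p̄_i = Σ_{j=1}^{n+1} L_{ij}`. -/
def pbar {n : ℕ} (L : Matrix (Fin n) (Fin (n + 1)) ℝ) (i : Fin n) : ℝ :=
  ∑ j, L i j

/-- Relative liabilities `π_{ij} = L_{ij} / p̄_i` if `p̄_i > 0`, else `0`. -/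
def relLiab {n : ℕ} (L : Matrix (Fin n) (Fin (n + 1)) ℝ) (i j : Fin n) : ℝ :=
  if 0 < pbar L i then L i j.castSucc / pbar L i else 0

/-- `p` is the greatest clearing payment vector for endowments `x` in the Eisenberg–Noe
setting: the greatest fixed point of `p ↦ p̄ ∧ (x + Πᵀ p)` on `[0, p̄]`. -/
def IsGreatestClearingPayment {n : ℕ} (L : Matrix (Fin n) (Fin (n + 1)) ℝ)
    (x p : Fin n → ℝ) : Prop :=
  IsGreatest {q : Fin n → ℝ | (∀ i, 0 ≤ q i ∧ q i ≤ pbar L i) ∧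
    ∀ i, q i = min (pbar L i) (x i + ∑ j, relLiab L j i * q j)} p

lemma relLiab_nonneg {n : ℕ} (L : Matrix (Fin n) (Fin (n + 1)) ℝ)
    (hL : ∀ i j, 0 ≤ L i j) (i j : Fin n) : 0 ≤ relLiab L i j := by
  unfold relLiab
  split
  · exact div_nonneg (hL i j.castSucc) (le_of_lt ‹_›)
  · exact le_refl 0

/-- Key Knaster–Tarski-type lemma: any subsolution in `[0, p̄]` is below the greatest
clearing payment. -/
lemma sub_le_clearing {n : ℕ} (L : Matrix (Fin n) (Fin (n + 1)) ℝ)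
    (hL : ∀ i j, 0 ≤ L i j) (x : Fin n → ℝ) (p : Fin n → ℝ)
    (hp : IsGreatestClearingPayment L x p)
    (q : Fin n → ℝ) (hq0 : ∀ i, 0 ≤ q i) (hqb : ∀ i, q i ≤ pbar L i)
    (hsub : ∀ i, q i ≤ min (pbar L i) (x i + ∑ j, relLiab L j i * q j)) :
    ∀ i, q i ≤ p i := by
  set S : Set (Fin n → ℝ) := {w | (∀ i, 0 ≤ w i ∧ w i ≤ pbar L i) ∧
    ∀ i, w i ≤ min (pbar L i) (x i + ∑ j, relLiab L j i * w j)} with hS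
  have hqS : q ∈ S := ⟨fun i => ⟨hq0 i, hqb i⟩, hsub⟩
  set r : Fin n → ℝ := fun i => sSup ((fun w => w i) '' S) with hr
  have hbdd : ∀ i, BddAbove ((fun w => w i) '' S) := by
    intro i
    refine ⟨pbar L i, ?_⟩
    rintro v ⟨w, hw, rfl⟩
    exact (hw.1 i).2
  have hle_r : ∀ w ∈ S, ∀ i, w i ≤ r i := fun w hw i =>
    le_csSup (hbdd i) ⟨w, hw, rfl⟩
  have hmono : ∀ u v : Fin n → ℝ, (∀ j, u j ≤ v j) → ∀ i,
      min (pbar L i) (x i + ∑ j, relLiab L j i * u j)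
        ≤ min (pbar L i) (x i + ∑ j, relLiab L j i * v j) := by
    intro u v huv i
    exact min_le_min le_rfl (add_le_add_right (Finset.sum_le_sum fun j _ =>
      mul_le_mul_of_nonneg_left (huv j) (relLiab_nonneg L hL j i)) _)
  have hrΦ : ∀ i, r i ≤ min (pbar L i) (x i + ∑ j, relLiab L j i * r j) := by
    intro i
    refine csSup_le ⟨q i, ⟨q, hqS, rfl⟩⟩ ?_
    rintro v ⟨w, hw, rfl⟩
    exact (hw.2 i).trans (hmono w r (fun j => hle_r w hw j) i)
  have hΦS : (fun i => min (pbar L i) (x i + ∑ j, relLiab L j i * r j)) ∈ S := by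
    refine ⟨fun i => ⟨?_, min_le_left _ _⟩, fun i => hmono r _ hrΦ i⟩
    exact le_trans (hq0 i) (le_trans (hle_r q hqS i) (hrΦ i))
  have hΦr : ∀ i, min (pbar L i) (x i + ∑ j, relLiab L j i * r j) ≤ r i :=
    hle_r _ hΦS
  have hfix : ∀ i, r i = min (pbar L i) (x i + ∑ j, relLiab L j i * r j) :=
    fun i => le_antisymm (hrΦ i) (hΦr i)
  have hrmem : r ∈ {w : Fin n → ℝ | (∀ i, 0 ≤ w i ∧ w i ≤ pbar L i) ∧
      ∀ i, w i = min (pbar L i) (x i + ∑ j, relLiab L j i * w j)} :=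
    ⟨fun i => ⟨le_trans (hq0 i) (hle_r q hqS i),
      (hfix i).le.trans (min_le_left _ _)⟩, hfix⟩
  have hrp : r ≤ p := hp.2 hrmem
  exact fun i => (hle_r q hqS i).trans (hrp i)

/-- Convex combinations of clearing payments are subsolutions, hence below the
clearing payment of the combined endowment. -/
lemma combo_le_clearing {n : ℕ} (L : Matrix (Fin n) (Fin (n + 1)) ℝ)
    (hL : ∀ i j, 0 ≤ L i j)
    (P : (Fin n → ℝ) → (Fin n → ℝ))
    (hP : ∀ x : Fin n → ℝ, (∀ i, 0 ≤ x i) → IsGreatestClearingPayment L x (P x))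
    (x y : Fin n → ℝ) (hx : ∀ i, 0 ≤ x i) (hy : ∀ i, 0 ≤ y i)
    (a b : ℝ) (ha : 0 ≤ a) (hb : 0 ≤ b) (hab : a + b = 1) :
    ∀ i, a * P x i + b * P y i ≤ P (a • x + b • y) i := by
  have hz : ∀ i, 0 ≤ (a • x + b • y) i := fun i =>
    add_nonneg (mul_nonneg ha (hx i)) (mul_nonneg hb (hy i))
  have hpx := hP x hx
  have hpy := hP y hy
  apply sub_le_clearing L hL _ _ (hP _ hz)
  · intro i
    exact add_nonneg (mul_nonneg ha ((hpx.1.1 i).1)) (mul_nonneg hb ((hpy.1.1 i).1))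
  · intro i
    calc a * P x i + b * P y i ≤ a * pbar L i + b * pbar L i :=
          add_le_add (mul_le_mul_of_nonneg_left (hpx.1.1 i).2 ha)
            (mul_le_mul_of_nonneg_left (hpy.1.1 i).2 hb)
      _ = pbar L i := by rw [← add_mul, hab, one_mul]
  · intro i
    have hx' := hpx.1.2 i
    have hy' := hpy.1.2 i
    have hsum : ∑ j, relLiab L j i * (a * P x j + b * P y j)
        = a * (∑ j, relLiab L j i * P x j) + b * (∑ j, relLiab L j i * P y j) := by
      rw [Finset.mul_sum, Finset.mul_sum, ← Finset.sum_add_distrib]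
      exact Finset.sum_congr rfl fun j _ => by ring
    have h1 : a * P x i + b * P y i
        ≤ (a • x + b • y) i + ∑ j, relLiab L j i * (a * P x j + b * P y j) := by
      rw [hx', hy', hsum]
      have := add_le_add
        (mul_le_mul_of_nonneg_left (min_le_right (pbar L i) (x i + ∑ j, relLiab L j i * P x j)) ha)
        (mul_le_mul_of_nonneg_left (min_le_right (pbar L i) (y i + ∑ j, relLiab L j i * P y j)) hb)
      calc a * min (pbar L i) (x i + ∑ j, relLiab L j i * P x j)
            + b * min (pbar L i) (y i + ∑ j, relLiab L j i * P y j)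
          ≤ a * (x i + ∑ j, relLiab L j i * P x j)
            + b * (y i + ∑ j, relLiab L j i * P y j) := this
        _ = (a • x + b • y) i + (a * (∑ j, relLiab L j i * P x j)
              + b * (∑ j, relLiab L j i * P y j)) := by
            simp [Pi.add_apply, Pi.smul_apply, smul_eq_mul]; ring
    have h2 : a * P x i + b * P y i ≤ pbar L i := by
      calc a * P x i + b * P y i ≤ a * pbar L i + b * pbar L i :=
            add_le_add (mul_le_mul_of_nonneg_left (hpx.1.1 i).2 ha)
              (mul_le_mul_of_nonneg_left (hpy.1.1 i).2 hb)
        _ = pbar L i := by rw [← add_mul, hab, one_mul]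
    exact le_min h2 h1

theorem clearing_payment_concave (n : ℕ) (hn : 1 ≤ n)
    (L : Matrix (Fin n) (Fin (n + 1)) ℝ)
    (hL : ∀ i j, 0 ≤ L i j) (hLdiag : ∀ i : Fin n, L i i.castSucc = 0)
    (P : (Fin n → ℝ) → (Fin n → ℝ))
    (hP : ∀ x : Fin n → ℝ, (∀ i, 0 ≤ x i) → IsGreatestClearingPayment L x (P x)) :
    ∀ i : Fin n,
      ConcaveOn ℝ {x : Fin n → ℝ | ∀ j, 0 ≤ x j} (fun x => P x i)
      ∧ ConcaveOn ℝ {x : Fin n → ℝ | ∀ j, 0 ≤ x j}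
          (fun x => x i + (∑ j, relLiab L j i * P x j) - pbar L i) := by
  have hconv : Convex ℝ {x : Fin n → ℝ | ∀ j, 0 ≤ x j} := by
    intro x hx y hy a b ha hb hab j
    exact add_nonneg (mul_nonneg ha (hx j)) (mul_nonneg hb (hy j))
  intro i
  constructor
  · refine ⟨hconv, ?_⟩
    intro x hx y hy a b ha hb hab
    simpa [smul_eq_mul] using combo_le_clearing L hL P hP x y hx hy a b ha hb hab i
  · refine ⟨hconv, ?_⟩
    intro x hx y hy a b ha hb hab
    have hkey := combo_le_clearing L hL P hP x y hx hy a b ha hb hab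
    have hsum : a * (∑ j, relLiab L j i * P x j) + b * (∑ j, relLiab L j i * P y j)
        ≤ ∑ j, relLiab L j i * P (a • x + b • y) j := by
      rw [Finset.mul_sum, Finset.mul_sum, ← Finset.sum_add_distrib]
      refine Finset.sum_le_sum fun j _ => ?_
      have := mul_le_mul_of_nonneg_left (hkey j) (relLiab_nonneg L hL j i)
      calc a * (relLiab L j i * P x j) + b * (relLiab L j i * P y j)
          = relLiab L j i * (a * P x j + b * P y j) := by ring
        _ ≤ relLiab L j i * P (a • x + b • y) j := this
    simp only [smul_eq_mul, Pi.add_apply, Pi.smul_apply]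
    have hring : a * (x i + (∑ j, relLiab L j i * P x j) - pbar L i)
        + b * (y i + (∑ j, relLiab L j i * P y j) - pbar L i)
        = a * x i + b * y i + (a * (∑ j, relLiab L j i * P x j)
          + b * (∑ j, relLiab L j i * P y j)) - (a + b) * pbar L i := by ring
    rw [hring, hab, one_mul]
    linarith [hsum]
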